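/- Fix M > 0 and r > 0. Then the Newman–Penrose Ricci scalar Λ(ω) = −ω/2 + (ω/2)(1 + 4M/(ωr³))^{−1/2} + (M/r³)(1 + 4M/(ωr³))^{−3/2} + (5M²/(2ωr⁶))(1 + 4M/(ωr³))^{−3/2} tends to 0 as ω → ∞; i.e. in the large-ω limit the Ricci scalar Λ of the KS spacetime vanishes, as in the Schwarzschild case. -/

import Mathlib

open Filter

/-- The Newman–Penrose Ricci scalar `Λ` of the KS spacetime, as a function of
the Hořava parameter `ω`, for fixed mass `M` and radius `r`. -/
noncomputable def KSLambda (M r ω : ℝ) : ℝ :=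
  -ω / 2 + (ω / 2) * (1 + 4 * M / (ω * r ^ 3)) ^ (-(1 / 2 : ℝ))
    + (M / r ^ 3) * (1 + 4 * M / (ω * r ^ 3)) ^ (-(3 / 2 : ℝ))
    + (5 * M ^ 2 / (2 * ω * r ^ 6)) * (1 + 4 * M / (ω * r ^ 3)) ^ (-(3 / 2 : ℝ))

/-- For fixed `M > 0` and `r > 0`, the NP Ricci scalar `Λ(ω)` of the KS
spacetime tends to `0` as `ω → ∞`, as in the Schwarzschild case. -/
theorem ks_lambda_large_omega (M r : ℝ) (hM : 0 < M) (hr : 0 < r) :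
    Tendsto (fun ω : ℝ => KSLambda M r ω) atTop (nhds 0) := by
  set a : ℝ := 4 * M / r ^ 3 with ha
  set f : ℝ → ℝ := fun t => (1 + a * t) ^ (-(1 / 2 : ℝ)) with hf
  have hf0 : f 0 = 1 := by simp [hf, Real.one_rpow]
  have hd1 : HasDerivAt (fun t : ℝ => 1 + a * t) a 0 :=
    ((hasDerivAt_id (0:ℝ)).const_mul a).const_add 1 |>.congr_deriv (by ring)
  have hd2 : HasDerivAt (fun x : ℝ => x ^ (-(1/2:ℝ))) (-(1/2:ℝ)) 1 := by
    have := Real.hasDerivAt_rpow_const (x := (1:ℝ)) (p := -(1/2:ℝ)) (Or.inl one_ne_zero)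
    simpa using this
  have hdf : HasDerivAt f (-(1/2:ℝ) * a) 0 := by
    have := HasDerivAt.comp (0:ℝ) (by simpa using hd2) hd1
    simpa [hf, Function.comp_def] using this
  have hslope : Tendsto (fun t => (f t - 1) / t) (nhdsWithin 0 {(0:ℝ)}ᶜ)
      (nhds (-(1/2:ℝ) * a)) := by
    have := hasDerivAt_iff_tendsto_slope.mp hdf
    refine this.congr (fun t => ?_)
    simp [slope, hf0, div_eq_inv_mul]
  set g : ℝ → ℝ := fun t => (1 + a * t) ^ (-(3 / 2 : ℝ)) with hg
  have hgc : Tendsto g (nhdsWithin 0 {(0:ℝ)}ᶜ) (nhds 1) := by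
    have hc : ContinuousAt g 0 := by
      have : ContinuousAt (fun t : ℝ => 1 + a * t) 0 := by fun_prop
      exact (Real.continuousAt_rpow_const _ _ (by norm_num)).comp this
    have := hc.continuousWithinAt (s := {(0:ℝ)}ᶜ)
    simpa [ContinuousWithinAt, hg, Real.one_rpow] using this
  -- limit of F along nhdsWithin 0 {0}ᶜ
  set F : ℝ → ℝ := fun t =>
    (1/2) * ((f t - 1) / t) + (M / r ^ 3) * g t + (5 * M ^ 2 / (2 * r ^ 6)) * t * g t
    with hF
  have hFlim : Tendsto F (nhdsWithin 0 {(0:ℝ)}ᶜ) (nhds 0) := by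
    have h3 : Tendsto (fun t : ℝ => t) (nhdsWithin 0 {(0:ℝ)}ᶜ) (nhds 0) :=
      tendsto_id.mono_left nhdsWithin_le_nhds
    have := ((hslope.const_mul (1/2:ℝ)).add (hgc.const_mul (M / r ^ 3))).add
      (((h3.const_mul (5 * M ^ 2 / (2 * r ^ 6))).mul hgc))
    have heq : (1/2:ℝ) * (-(1/2:ℝ) * a) + (M / r ^ 3) * 1
        + (5 * M ^ 2 / (2 * r ^ 6)) * 0 * 1 = 0 := by
      rw [ha]; field_simp; ring
    rw [heq] at this
    exact this.congr (fun t => by simp only [hF, hg])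
  -- composition with ω ↦ 1/ω
  have hinv : Tendsto (fun ω : ℝ => ω⁻¹) atTop (nhdsWithin 0 {(0:ℝ)}ᶜ) := by
    rw [tendsto_nhdsWithin_iff]
    refine ⟨tendsto_inv_atTop_zero, ?_⟩
    filter_upwards [eventually_gt_atTop (0:ℝ)] with ω hω
    simp [ne_of_gt (inv_pos.mpr hω)]
  have hcomp := hFlim.comp hinv
  refine hcomp.congr' ?_
  filter_upwards [eventually_gt_atTop (0:ℝ)] with ω hω
  have hωne : ω ≠ 0 := ne_of_gt hω
  have hrne : r ^ 3 ≠ 0 := pow_ne_zero _ (ne_of_gt hr)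
  have harg : 4 * M / (ω * r ^ 3) = a * ω⁻¹ := by
    rw [ha]; field_simp
  simp only [Function.comp, hF, KSLambda, hf, hg, harg]
  field_simp
  ring
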